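/- Componentwise exponential domination: for any real matrix A and vector v, |e^{At} v| ≤ e^{Lt} |v| holds componentwise for all t ≥ 0, where L is the Metzler majorant of A (Lᵢᵢ = Aᵢᵢ, Lᵢⱼ = |Aᵢⱼ| for i ≠ j) and |·| denotes componentwise absolute value. -/

import Mathlib

set_option maxHeartbeats 1000000

open Matrix NormedSpace

variable {n : ℕ}

-- entrywise domination of mulVec
lemma abs_mulVec_le {M N : Matrix (Fin n) (Fin n) ℝ} {v w : Fin n → ℝ}
    (hMN : ∀ i j, |M i j| ≤ N i j) (hvw : ∀ j, |v j| ≤ w j) (i : Fin n) :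
    |M.mulVec v i| ≤ N.mulVec w i := by
  calc |M.mulVec v i| = |∑ j, M i j * v j| := rfl
    _ ≤ ∑ j, |M i j * v j| := Finset.abs_sum_le_sum_abs _ _
    _ ≤ ∑ j, N i j * w j := by
        refine Finset.sum_le_sum fun j _ => ?_
        rw [abs_mul]
        exact mul_le_mul (hMN i j) (hvw j) (abs_nonneg _)
          ((abs_nonneg (M i j)).trans (hMN i j))
    _ = N.mulVec w i := rfl

lemma abs_pow_mulVec_le {M N : Matrix (Fin n) (Fin n) ℝ} {v w : Fin n → ℝ}
    (hMN : ∀ i j, |M i j| ≤ N i j) (hvw : ∀ j, |v j| ≤ w j) (k : ℕ) :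
    ∀ i, |(M ^ k).mulVec v i| ≤ (N ^ k).mulVec w i := by
  induction k with
  | zero => simpa using hvw
  | succ k ih =>
    intro i
    rw [pow_succ', pow_succ', ← Matrix.mulVec_mulVec, ← Matrix.mulVec_mulVec]
    exact abs_mulVec_le hMN ih i

lemma abs_exp_mulVec_le {M N : Matrix (Fin n) (Fin n) ℝ} {v w : Fin n → ℝ}
    (hMN : ∀ i j, |M i j| ≤ N i j) (hvw : ∀ j, |v j| ≤ w j) (i : Fin n) :
    |(exp M).mulVec v i| ≤ (exp N).mulVec w i := by
  letI : NormedRing (Matrix (Fin n) (Fin n) ℝ) := Matrix.linftyOpNormedRing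
  letI : NormedAlgebra ℝ (Matrix (Fin n) (Fin n) ℝ) := Matrix.linftyOpNormedAlgebra
  -- evaluation continuous linear map
  have key : ∀ (X : Matrix (Fin n) (Fin n) ℝ) (u : Fin n → ℝ) (j : Fin n),
      (exp X).mulVec u j = ∑' k : ℕ, (((Nat.factorial k : ℝ) : ℝ)⁻¹ • X ^ k).mulVec u j := by
    intro X u j
    let f : Matrix (Fin n) (Fin n) ℝ →ₗ[ℝ] ℝ :=
      { toFun := fun Y => Y.mulVec u j
        map_add' := fun Y Z => by simp [Matrix.add_mulVec]
        map_smul' := fun c Y => by simp [Matrix.smul_mulVec] }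
    have hf : Continuous f := LinearMap.continuous_of_finiteDimensional f
    have hs : Summable fun k : ℕ => (((Nat.factorial k : ℝ) : ℝ)⁻¹ • X ^ k) := expSeries_summable' X
    have := (ContinuousLinearMap.map_tsum ⟨f, hf⟩ hs)
    rw [exp_eq_tsum ℝ]
    exact this
  rw [key, key]
  have summ : ∀ (X : Matrix (Fin n) (Fin n) ℝ) (u : Fin n → ℝ) (j : Fin n),
      Summable (fun k : ℕ => (((Nat.factorial k : ℝ)) ⁻¹ • X ^ k).mulVec u j) := by
    intro X u j
    let f : Matrix (Fin n) (Fin n) ℝ →ₗ[ℝ] ℝ :=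
      { toFun := fun Y => Y.mulVec u j
        map_add' := fun Y Z => by simp [Matrix.add_mulVec]
        map_smul' := fun c Y => by simp [Matrix.smul_mulVec] }
    have hf : Continuous f := LinearMap.continuous_of_finiteDimensional f
    exact (expSeries_summable' (𝕂 := ℝ) X).map (⟨f, hf⟩ : _ →L[ℝ] ℝ) (by exact hf)
  have hsM : Summable (fun k : ℕ => (((Nat.factorial k : ℝ) : ℝ)⁻¹ • M ^ k).mulVec v i) := by
    exact summ M v i
  have hsN : Summable (fun k : ℕ => (((Nat.factorial k : ℝ) : ℝ)⁻¹ • N ^ k).mulVec w i) :=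
    summ N w i
  calc |∑' k : ℕ, (((Nat.factorial k : ℝ) : ℝ)⁻¹ • M ^ k).mulVec v i|
      ≤ ∑' k : ℕ, |(((Nat.factorial k : ℝ) : ℝ)⁻¹ • M ^ k).mulVec v i| := by
        have := norm_tsum_le_tsum_norm (f := fun k : ℕ => (((Nat.factorial k : ℝ))⁻¹ • M ^ k).mulVec v i) (by simpa [Real.norm_eq_abs] using hsM.abs)
        simpa [Real.norm_eq_abs] using this
    _ ≤ ∑' k : ℕ, (((Nat.factorial k : ℝ) : ℝ)⁻¹ • N ^ k).mulVec w i := by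
        refine Summable.tsum_le_tsum (fun k => ?_) hsM.abs hsN
        simp only [Matrix.smul_mulVec, Pi.smul_apply, smul_eq_mul, abs_mul]
        rw [abs_of_nonneg (by positivity : (0:ℝ) ≤ ((Nat.factorial k : ℝ) : ℝ)⁻¹)]
        exact mul_le_mul_of_nonneg_left (abs_pow_mulVec_le hMN hvw k i) (by positivity)

lemma exp_shift {n : ℕ} (B : Matrix (Fin n) (Fin n) ℝ) (t c : ℝ) :
    exp (t • (B + c • (1 : Matrix (Fin n) (Fin n) ℝ))) =
      Real.exp (t * c) • exp (t • B) := by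
  letI : NormedRing (Matrix (Fin n) (Fin n) ℝ) := Matrix.linftyOpNormedRing
  letI : NormedAlgebra ℝ (Matrix (Fin n) (Fin n) ℝ) := Matrix.linftyOpNormedAlgebra
  have h1 : t • (B + c • (1 : Matrix (Fin n) (Fin n) ℝ)) = t • B + (t * c) • 1 := by
    rw [smul_add, smul_smul]
  rw [h1, Matrix.exp_add_of_commute _ _ ((Commute.one_right (t • B)).smul_right (t * c))]
  have h2 : (t * c) • (1 : Matrix (Fin n) (Fin n) ℝ) = algebraMap ℝ _ (t * c) := by
    rw [Algebra.algebraMap_eq_smul_one]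
  erw [h2, ← algebraMap_exp_comm, Algebra.algebraMap_eq_smul_one, ← Real.exp_eq_exp_ℝ,
    mul_smul_comm, mul_one]

theorem exp_metzler_majorant_domination {n : ℕ}
    (A L : Matrix (Fin n) (Fin n) ℝ)
    (hdiag : ∀ i, L i i = A i i)
    (hoff : ∀ i j, i ≠ j → L i j = |A i j|)
    (v : Fin n → ℝ) :
    ∀ t ≥ (0 : ℝ), ∀ i,
      |(NormedSpace.exp (t • A)).mulVec v i| ≤
        (NormedSpace.exp (t • L)).mulVec (fun j => |v j|) i := by
  intro t ht i
  set c : ℝ := ∑ j, |A j j| with hc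
  have hcA : ∀ j, 0 ≤ A j j + c := by
    intro j
    have h1 : |A j j| ≤ c := Finset.single_le_sum (f := fun j => |A j j|)
      (fun _ _ => abs_nonneg _) (Finset.mem_univ j)
    linarith [neg_abs_le (A j j)]
  have hMN : ∀ i j, |(t • (A + c • (1 : Matrix (Fin n) (Fin n) ℝ))) i j| ≤
      (t • (L + c • (1 : Matrix (Fin n) (Fin n) ℝ))) i j := by
    intro i j
    simp only [Matrix.smul_apply, Matrix.add_apply, Matrix.smul_apply, Matrix.one_apply,
      smul_eq_mul]
    by_cases h : i = j
    · subst h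
      simp only [if_pos rfl, if_true, mul_one]
      rw [hdiag, abs_of_nonneg (by nlinarith [hcA i] : (0:ℝ) ≤ t * (A i i + c))]
    · simp only [if_neg h, mul_zero, add_zero, abs_mul, hoff i j h,
        abs_of_nonneg ht]
      exact le_rfl
  have hvw : ∀ j, |v j| ≤ |v j| := fun j => le_refl _
  have key := abs_exp_mulVec_le hMN hvw i
  rw [exp_shift, exp_shift] at key
  have hE : (0:ℝ) < Real.exp (t * c) := Real.exp_pos _
  simp only [Matrix.smul_mulVec, Pi.smul_apply, smul_eq_mul, abs_mul,
    abs_of_pos hE] at key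
  exact le_of_mul_le_mul_left key hE
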